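/- Let μ ∈ ℝ, σ > 0 and α ∈ (0,1). Then inf over all probability measures in V(μ,σ) of the left-continuous Value-at-Risk VaR_α equals inf over V(μ,σ) of the right-continuous Value-at-Risk VaR⁺_α, and both equal μ − σ·√((1−α)/α). Moreover, the infimum of VaR_α is attained by the two-point distribution placing mass α at μ − σ√((1−α)/α) and mass 1−α at μ + σ√(α/(1−α)). -/

import Mathlib

open MeasureTheory Set

/-- The cumulative distribution function of a measure on ℝ. -/
noncomputable def cdf' (ν : Measure ℝ) (x : ℝ) : ℝ := (ν (Iic x)).toReal

/-- Left-continuous Value-at-Risk: `F⁻¹(α) = inf {x | F x ≥ α}`. -/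
noncomputable def VaR (ν : Measure ℝ) (α : ℝ) : ℝ := sInf {x : ℝ | α ≤ cdf' ν x}

/-- Right-continuous Value-at-Risk: `F⁻¹⁺(α) = sup {x | F x ≤ α}`. -/
noncomputable def VaRp (ν : Measure ℝ) (α : ℝ) : ℝ := sSup {x : ℝ | cdf' ν x ≤ α}

/-- `V(m,s)`: Borel probability measures on ℝ with mean `m` and variance `s²`. -/
def Vset (m s : ℝ) : Set (Measure ℝ) :=
  {ν | IsProbabilityMeasure ν ∧ (∫ x, x ∂ν) = m ∧ (∫ x, (x - m) ^ 2 ∂ν) = s ^ 2}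

/-- Symmetry of a measure about the point `m`. -/
def SymmAbout (ν : Measure ℝ) (m : ℝ) : Prop :=
  ∀ x : ℝ, ν (Iic x) = ν (Ici (2 * m - x))

/-- Unimodality: the cdf is convex on `(-∞, m)` and concave on `(m, ∞)` for some mode `m`. -/
def Unimodal (ν : Measure ℝ) : Prop :=
  ∃ m : ℝ, ConvexOn ℝ (Iio m) (cdf' ν) ∧ ConcaveOn ℝ (Ioi m) (cdf' ν)

/-- The uniform distribution on the interval `[a, b]`. -/
noncomputable def unif (a b : ℝ) : Measure ℝ :=
  (ENNReal.ofReal (b - a))⁻¹ • volume.restrict (Icc a b)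

section BestCaseAux

open Filter

lemma integrable_dirac' {f : ℝ → ℝ} (hf : Measurable f) (a : ℝ) :
    Integrable f (Measure.dirac a) := by
  refine ⟨hf.aestronglyMeasurable, ?_⟩
  rw [HasFiniteIntegral, lintegral_dirac' _ (by measurability)]
  exact ENNReal.coe_lt_top

lemma integral_twoPoint {f : ℝ → ℝ} (hf : Measurable f) {β : ℝ} (hβ0 : 0 ≤ β) (hβ1 : β ≤ 1)
    (a b : ℝ) :
    ∫ x, f x ∂(ENNReal.ofReal β • Measure.dirac a + ENNReal.ofReal (1 - β) • Measure.dirac b)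
      = β * f a + (1 - β) * f b := by
  rw [integral_add_measure ((integrable_dirac' hf a).smul_measure ENNReal.ofReal_ne_top)
      ((integrable_dirac' hf b).smul_measure ENNReal.ofReal_ne_top),
    integral_smul_measure, integral_smul_measure, integral_dirac, integral_dirac,
    ENNReal.toReal_ofReal hβ0, ENNReal.toReal_ofReal (by linarith)]
  simp [smul_eq_mul]

lemma isProb_twoPoint {β : ℝ} (hβ0 : 0 ≤ β) (hβ1 : β ≤ 1) (a b : ℝ) :
    IsProbabilityMeasure
      (ENNReal.ofReal β • Measure.dirac a + ENNReal.ofReal (1 - β) • Measure.dirac b) := by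
  constructor
  rw [Measure.add_apply, Measure.smul_apply, Measure.smul_apply]
  simp [smul_eq_mul, ← ENNReal.ofReal_add hβ0 (by linarith : (0:ℝ) ≤ 1 - β)]

lemma cdf_twoPoint {β : ℝ} (hβ0 : 0 ≤ β) (hβ1 : β ≤ 1) (a b x : ℝ) :
    cdf' (ENNReal.ofReal β • Measure.dirac a + ENNReal.ofReal (1 - β) • Measure.dirac b) x
      = (if a ≤ x then β else 0) + (if b ≤ x then 1 - β else 0) := by
  unfold cdf'
  rw [Measure.add_apply, Measure.smul_apply, Measure.smul_apply,
    Measure.dirac_apply' _ measurableSet_Iic, Measure.dirac_apply' _ measurableSet_Iic]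
  have h1 : (0:ℝ) ≤ 1 - β := by linarith
  by_cases ha : a ≤ x <;> by_cases hb : b ≤ x <;>
    simp [indicator, mem_Iic, ha, hb, smul_eq_mul, ENNReal.toReal_add, ENNReal.toReal_ofReal,
      hβ0, h1, ENNReal.ofReal_ne_top]

lemma mul_sqrt_div {c d : ℝ} (hc : 0 < c) (hd : 0 ≤ d) :
    c * Real.sqrt (d / c) = Real.sqrt (c * d) := by
  rw [show d / c = (c * d) / c ^ 2 by field_simp,
    Real.sqrt_div (by positivity), Real.sqrt_sq hc.le]
  field_simp

lemma twoPoint_mem (m s : ℝ) (hs : 0 < s) {β : ℝ} (hβ : β ∈ Ioo (0:ℝ) 1) :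
    (ENNReal.ofReal β • Measure.dirac (m - s * Real.sqrt ((1 - β) / β)) +
      ENNReal.ofReal (1 - β) • Measure.dirac (m + s * Real.sqrt (β / (1 - β)))) ∈ Vset m s := by
  obtain ⟨h0, h1⟩ := hβ
  have hq1 : (0:ℝ) ≤ (1 - β) / β := div_nonneg (by linarith) h0.le
  have hq2 : (0:ℝ) ≤ β / (1 - β) := div_nonneg h0.le (by linarith)
  refine ⟨isProb_twoPoint h0.le h1.le _ _, ?_, ?_⟩
  · rw [integral_twoPoint (f := fun x => x) measurable_id h0.le h1.le]
    have e1 : β * Real.sqrt ((1 - β) / β) = Real.sqrt (β * (1 - β)) :=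
      mul_sqrt_div h0 (by linarith)
    have e2 : (1 - β) * Real.sqrt (β / (1 - β)) = Real.sqrt ((1 - β) * β) :=
      mul_sqrt_div (by linarith) h0.le
    rw [mul_comm (1 - β) β] at e2
    linear_combination s * e2 - s * e1
  · rw [integral_twoPoint (by fun_prop) h0.le h1.le]
    have hne1 : β ≠ 0 := h0.ne'
    have hne2 : (1 : ℝ) - β ≠ 0 := by linarith
    have q1 : Real.sqrt ((1 - β) / β) ^ 2 = (1 - β) / β := Real.sq_sqrt hq1
    have q2 : Real.sqrt (β / (1 - β)) ^ 2 = β / (1 - β) := Real.sq_sqrt hq2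
    have r1 : (m - s * Real.sqrt ((1 - β) / β) - m) ^ 2 = s ^ 2 * ((1 - β) / β) := by
      linear_combination s ^ 2 * q1
    have r2 : (m + s * Real.sqrt (β / (1 - β)) - m) ^ 2 = s ^ 2 * (β / (1 - β)) := by
      linear_combination s ^ 2 * q2
    rw [r1, r2]
    field_simp
    ring

lemma twoPoint_VaR (m s α : ℝ) (hs : 0 < s) (hα : α ∈ Ioo (0:ℝ) 1) :
    VaR (ENNReal.ofReal α • Measure.dirac (m - s * Real.sqrt ((1 - α) / α)) +
      ENNReal.ofReal (1 - α) • Measure.dirac (m + s * Real.sqrt (α / (1 - α)))) α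
      = m - s * Real.sqrt ((1 - α) / α) := by
  obtain ⟨h0, h1⟩ := hα
  set A := m - s * Real.sqrt ((1 - α) / α) with hA
  set B := m + s * Real.sqrt (α / (1 - α)) with hB
  have hAB : A < B := by
    have p1 : 0 < Real.sqrt ((1 - α) / α) :=
      Real.sqrt_pos.mpr (div_pos (by linarith) h0)
    have p2 : 0 ≤ Real.sqrt (α / (1 - α)) := Real.sqrt_nonneg _
    rw [hA, hB]; nlinarith
  have hset : {x : ℝ | α ≤ cdf' (ENNReal.ofReal α • Measure.dirac A +
      ENNReal.ofReal (1 - α) • Measure.dirac B) x} = Ici A := by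
    ext x
    rw [mem_setOf_eq, cdf_twoPoint h0.le h1.le, mem_Ici]
    constructor
    · intro h
      by_contra hx
      push_neg at hx
      rw [if_neg (not_le.mpr hx), if_neg (not_le.mpr (hx.trans hAB)), add_zero] at h
      linarith
    · intro h
      rw [if_pos h]
      split_ifs with h2 <;> linarith
  rw [VaR, hset, csInf_Ici]

lemma twoPoint_VaRp (m s α : ℝ) (hs : 0 < s) {β : ℝ} (hβ : β ∈ Ioo (0:ℝ) 1)
    (hαβ : 0 < α) (hlt : α < β) :
    VaRp (ENNReal.ofReal β • Measure.dirac (m - s * Real.sqrt ((1 - β) / β)) +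
      ENNReal.ofReal (1 - β) • Measure.dirac (m + s * Real.sqrt (β / (1 - β)))) α
      = m - s * Real.sqrt ((1 - β) / β) := by
  obtain ⟨h0, h1⟩ := hβ
  set A := m - s * Real.sqrt ((1 - β) / β) with hA
  set B := m + s * Real.sqrt (β / (1 - β)) with hB
  have hset : {x : ℝ | cdf' (ENNReal.ofReal β • Measure.dirac A +
      ENNReal.ofReal (1 - β) • Measure.dirac B) x ≤ α} = Iio A := by
    ext x
    rw [mem_setOf_eq, cdf_twoPoint h0.le h1.le, mem_Iio]
    constructor
    · intro h
      by_contra hx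
      push_neg at hx
      rw [if_pos hx] at h
      split_ifs at h <;> linarith
    · intro h
      rw [if_neg (not_le.mpr h)]
      have hAB : x < B := by
        have p1 : 0 ≤ Real.sqrt ((1 - β) / β) := Real.sqrt_nonneg _
        have p2 : 0 ≤ Real.sqrt (β / (1 - β)) := Real.sqrt_nonneg _
        rw [hB]; rw [hA] at h; nlinarith
      rw [if_neg (not_le.mpr hAB)]
      linarith
  rw [VaRp, hset, csSup_Iio]

lemma cantelli {ν : Measure ℝ} (hν : IsProbabilityMeasure ν) {m s : ℝ} (hs : 0 < s)
    (hm : (∫ x, x ∂ν) = m) (hv : (∫ x, (x - m) ^ 2 ∂ν) = s ^ 2) {x : ℝ} (hx : x < m) :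
    cdf' ν x ≤ s ^ 2 / (s ^ 2 + (m - x) ^ 2) := by
  have hI2 : Integrable (fun y => (y - m) ^ 2) ν := by
    by_contra h
    rw [integral_undef h] at hv
    exact absurd hv.symm (by positivity)
  have hI1 : Integrable (fun y => y - m) ν := by
    refine Integrable.mono' (hI2.add (integrable_const 1)) (by fun_prop) ?_
    filter_upwards with y
    simp only [Pi.add_apply, Real.norm_eq_abs]
    nlinarith [sq_abs (y - m), sq_nonneg (|y - m| - 1)]
  have hmean : (∫ y, (y - m) ∂ν) = 0 := by
    have hIy : Integrable (fun y : ℝ => y) ν :=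
      (hI1.add (integrable_const m)).congr (Filter.Eventually.of_forall fun y => by simp)
    rw [integral_sub hIy (integrable_const m), hm, integral_const]
    simp
  set t : ℝ := m - x with ht
  have ht0 : 0 < t := by simp [ht]; linarith
  set u : ℝ := s ^ 2 / t with hu
  have hu0 : 0 < u := by positivity
  set g : ℝ → ℝ := fun y => ((m - y + u) / (t + u)) ^ 2 with hg
  have hgI : Integrable g ν := by
    have : g = fun y => ((t + u) ^ 2)⁻¹ * ((y - m) ^ 2 - (2 * u) * (y - m) + u ^ 2) := by
      funext y
      rw [hg]
      have : t + u ≠ 0 := by positivity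
      field_simp
      ring
    rw [this]
    exact ((hI2.sub (hI1.const_mul (2 * u))).add (integrable_const (u ^ 2))).const_mul _
  have hmono : cdf' ν x ≤ ∫ y, g y ∂ν := by
    rw [cdf', ← measureReal_def, ← integral_indicator_one measurableSet_Iic]
    refine integral_mono ?_ hgI ?_
    · exact (integrable_const 1).indicator measurableSet_Iic
    · intro y
      by_cases hy : y ∈ Iic x
      · rw [indicator_of_mem hy]
        have h1 : t + u ≤ m - y + u := by simp only [mem_Iic] at hy; simp [ht]; linarith
        have h2 : (1:ℝ) ≤ (m - y + u) / (t + u) := (one_le_div (by positivity)).mpr h1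
        have : (1:ℝ) ≤ ((m - y + u) / (t + u)) ^ 2 := by nlinarith
        simpa [hg] using this
      · rw [indicator_of_notMem hy]
        simp only [Pi.one_apply, hg]
        positivity
  have hint : (∫ y, g y ∂ν) = (s ^ 2 + u ^ 2) / (t + u) ^ 2 := by
    have hrw : g = fun y => ((t + u) ^ 2)⁻¹ * ((y - m) ^ 2 - (2 * u) * (y - m) + u ^ 2) := by
      funext y
      rw [hg]
      have : t + u ≠ 0 := by positivity
      field_simp
      ring
    have hIsub : Integrable (fun a : ℝ => (a - m) ^ 2 - 2 * u * (a - m)) ν :=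
      hI2.sub (hI1.const_mul (2 * u))
    rw [hrw, integral_const_mul, integral_add hIsub (integrable_const _),
      integral_sub hI2 (hI1.const_mul (2 * u)), integral_const_mul, hv, hmean, integral_const]
    simp
    ring
  rw [hint] at hmono
  refine hmono.trans (le_of_eq ?_)
  rw [hu]
  have hts : t ≠ 0 := ht0.ne'
  have hss : s ^ 2 + t ^ 2 ≠ 0 := by positivity
  field_simp
  ring

lemma cdf'_lt {ν : Measure ℝ} (hν : IsProbabilityMeasure ν) {m s α : ℝ} (hs : 0 < s)
    (hα : α ∈ Ioo (0:ℝ) 1)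
    (hm : (∫ x, x ∂ν) = m) (hv : (∫ x, (x - m) ^ 2 ∂ν) = s ^ 2) {x : ℝ}
    (hx : x < m - s * Real.sqrt ((1 - α) / α)) :
    cdf' ν x < α := by
  obtain ⟨h0, h1⟩ := hα
  have hq : (0:ℝ) ≤ (1 - α) / α := div_nonneg (by linarith) h0.le
  have hr : (0:ℝ) ≤ s * Real.sqrt ((1 - α) / α) := by positivity
  have hxm : x < m := by linarith
  have hC := cantelli hν hs hm hv hxm
  have hq' : (s * Real.sqrt ((1 - α) / α)) ^ 2 = s ^ 2 * ((1 - α) / α) := by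
    rw [mul_pow, Real.sq_sqrt hq]
  have ht : s * Real.sqrt ((1 - α) / α) < m - x := by linarith
  have ht2 : s ^ 2 * ((1 - α) / α) < (m - x) ^ 2 := by
    rw [← hq']; nlinarith
  have key : s ^ 2 / (s ^ 2 + (m - x) ^ 2) < α := by
    rw [div_lt_iff₀ (by positivity)]
    have : s ^ 2 * (1 - α) < α * (m - x) ^ 2 := by
      have := mul_lt_mul_of_pos_left ht2 h0
      calc s ^ 2 * (1 - α) = α * (s ^ 2 * ((1 - α) / α)) := by field_simp
        _ < α * (m - x) ^ 2 := this
    nlinarith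
  linarith

lemma cdf'_mono (ν : Measure ℝ) [IsFiniteMeasure ν] : Monotone (cdf' ν) := fun _ _ h =>
  ENNReal.toReal_mono (measure_ne_top ν _) (measure_mono (Iic_subset_Iic.mpr h))

lemma exists_cdf_ge (ν : Measure ℝ) [IsProbabilityMeasure ν] {c : ℝ} (hc : c < 1) :
    ∃ x, c ≤ cdf' ν x := by
  have h1 : Tendsto (fun x => ν (Iic x)) atTop (nhds 1) := by
    simpa using tendsto_measure_Iic_atTop ν
  have h2 : Tendsto (fun x => cdf' ν x) atTop (nhds 1) := by
    have := (ENNReal.tendsto_toReal (by simp)).comp h1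
    simpa [cdf', Function.comp_def] using this
  exact (h2.eventually (eventually_ge_nhds hc)).exists

end BestCaseAux

open Filter

/-- Best-case VaR under mean–variance information (Proposition 3.1(ii)). -/
theorem best_case_VaR (m s α : ℝ) (hs : 0 < s) (hα : α ∈ Ioo (0:ℝ) 1) :
    sInf ((fun ν => VaR ν α) '' Vset m s) = m - s * Real.sqrt ((1 - α) / α) ∧
    sInf ((fun ν => VaRp ν α) '' Vset m s) = m - s * Real.sqrt ((1 - α) / α) ∧
    ((ENNReal.ofReal α • Measure.dirac (m - s * Real.sqrt ((1 - α) / α)) +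
        ENNReal.ofReal (1 - α) • Measure.dirac (m + s * Real.sqrt (α / (1 - α)))) ∈ Vset m s ∧
      VaR (ENNReal.ofReal α • Measure.dirac (m - s * Real.sqrt ((1 - α) / α)) +
        ENNReal.ofReal (1 - α) • Measure.dirac (m + s * Real.sqrt (α / (1 - α)))) α
        = m - s * Real.sqrt ((1 - α) / α)) := by
  obtain ⟨h0, h1⟩ := hα
  set A := m - s * Real.sqrt ((1 - α) / α) with hAdef
  have hmem := twoPoint_mem m s hs (⟨h0, h1⟩ : α ∈ Ioo (0:ℝ) 1)
  have hVaR0 := twoPoint_VaR m s α hs ⟨h0, h1⟩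
  -- lower bound for VaR
  have hVaR_lb : ∀ ν ∈ Vset m s, A ≤ VaR ν α := by
    rintro ν ⟨hp, hm', hv'⟩
    haveI := hp
    have hne : {x : ℝ | α ≤ cdf' ν x}.Nonempty := exists_cdf_ge ν h1
    refine le_csInf hne fun y hy => ?_
    by_contra h
    push_neg at h
    exact absurd hy (not_le.mpr (cdf'_lt hp hs ⟨h0, h1⟩ hm' hv' h))
  -- lower bound for VaRp
  have hVaRp_lb : ∀ ν ∈ Vset m s, A ≤ VaRp ν α := by
    rintro ν ⟨hp, hm', hv'⟩
    haveI := hp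
    have hsub : Iio A ⊆ {x : ℝ | cdf' ν x ≤ α} := fun y hy =>
      (cdf'_lt hp hs ⟨h0, h1⟩ hm' hv' hy).le
    obtain ⟨x₀, hx₀⟩ := exists_cdf_ge ν (show (α + 1) / 2 < 1 by linarith)
    have hbdd : BddAbove {x : ℝ | cdf' ν x ≤ α} := by
      refine ⟨x₀, fun y hy => ?_⟩
      by_contra h
      push_neg at h
      have := cdf'_mono ν h.le
      simp only [mem_setOf_eq] at hy
      linarith
    rw [VaRp]
    calc A = sSup (Iio A) := csSup_Iio.symm
      _ ≤ sSup {x : ℝ | cdf' ν x ≤ α} :=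
          csSup_le_csSup hbdd ⟨A - 1, by simp⟩ hsub
  have hbddp : BddBelow ((fun ν => VaRp ν α) '' Vset m s) := by
    refine ⟨A, ?_⟩
    rintro y ⟨ν, hν, rfl⟩
    exact hVaRp_lb ν hν
  -- upper bound for inf of VaRp
  have hup : sInf ((fun ν => VaRp ν α) '' Vset m s) ≤ A := by
    have hev : ∀ᶠ β in nhdsWithin α (Ioi α),
        sInf ((fun ν => VaRp ν α) '' Vset m s) ≤ m - s * Real.sqrt ((1 - β) / β) := by
      filter_upwards [Ioo_mem_nhdsGT_of_mem (⟨le_refl α, h1⟩ : α ∈ Ico α 1)] with β hβ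
      have hβ' : β ∈ Ioo (0:ℝ) 1 := ⟨h0.trans hβ.1, hβ.2⟩
      exact csInf_le hbddp ⟨_, twoPoint_mem m s hs hβ', twoPoint_VaRp m s α hs hβ' h0 hβ.1⟩
    have hcontA : ContinuousAt (fun β : ℝ => m - s * Real.sqrt ((1 - β) / β)) α := by
      have hdiv : ContinuousAt (fun β : ℝ => (1 - β) / β) α :=
        ContinuousAt.div (by fun_prop) (by fun_prop) h0.ne'
      exact continuousAt_const.sub
        (continuousAt_const.mul (Real.continuous_sqrt.continuousAt.comp hdiv))
    have htend : Tendsto (fun β : ℝ => m - s * Real.sqrt ((1 - β) / β))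
        (nhdsWithin α (Ioi α)) (nhds A) :=
      (hcontA.tendsto).mono_left nhdsWithin_le_nhds
    exact ge_of_tendsto htend hev
  refine ⟨?_, ?_, hmem, hVaR0⟩
  · refine le_antisymm (csInf_le ?_ ⟨_, hmem, hVaR0⟩)
      (le_csInf ⟨_, mem_image_of_mem _ hmem⟩ ?_)
    · refine ⟨A, ?_⟩
      rintro y ⟨ν, hν, rfl⟩
      exact hVaR_lb ν hν
    · rintro y ⟨ν, hν, rfl⟩
      exact hVaR_lb ν hν
  · refine le_antisymm hup (le_csInf ⟨_, mem_image_of_mem _ hmem⟩ ?_)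
    rintro y ⟨ν, hν, rfl⟩
    exact hVaRp_lb ν hν
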